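/- Define u₀ : B₁(0)∖{0} → ℝ on the punctured unit disk in ℝ² by u₀(x) = ln(1 − ln|x|). Then u₀ is smooth on 0 < |x| < 1 and satisfies −Δu₀(x) = |∇u₀(x)|² pointwise for all 0 < |x| < 1; explicitly, |∇u₀(x)|² = 1/(|x|²(1 − ln|x|)²) and Δu₀(x) = −1/(|x|²(1 − ln|x|)²). -/

import Mathlib

open MeasureTheory Set

noncomputable section

/-- Partial derivative of a scalar function on `ℝ²` in the `i`-th coordinate
direction. -/
def pd (i : Fin 2) (g : EuclideanSpace ℝ (Fin 2) → ℝ) :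
    EuclideanSpace ℝ (Fin 2) → ℝ :=
  fun x => fderiv ℝ g x (EuclideanSpace.single i 1)

/-- Iterated spatial partial derivatives along a list of coordinate
directions. -/
def pds (ι : List (Fin 2)) (g : EuclideanSpace ℝ (Fin 2) → ℝ) :
    EuclideanSpace ℝ (Fin 2) → ℝ :=
  ι.foldr pd g

abbrev E2 := EuclideanSpace ℝ (Fin 2)

/-- scalar function: φ t = log (1 - log t / 2). -/
def φf : ℝ → ℝ := fun t => Real.log (1 - Real.log t / 2)

def ψf : ℝ → ℝ := fun t => -(t⁻¹ / 2) / (1 - Real.log t / 2)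

def ψ'f : ℝ → ℝ := fun t =>
  (((t ^ 2)⁻¹ / 2) * (1 - Real.log t / 2) - -(t⁻¹ / 2) * -(t⁻¹ / 2)) /
    (1 - Real.log t / 2) ^ 2

lemma hden {t : ℝ} (ht0 : 0 < t) (ht1 : t < 1) : 0 < 1 - Real.log t / 2 := by
  have := Real.log_neg ht0 ht1
  linarith

lemma hasDerivAt_inner_aux {t : ℝ} (ht0 : 0 < t) :
    HasDerivAt (fun t => 1 - Real.log t / 2) (-(t⁻¹ / 2)) t :=
  (((Real.hasDerivAt_log ht0.ne').div_const 2).const_sub 1)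

lemma hasDerivAt_φf {t : ℝ} (ht0 : 0 < t) (ht1 : t < 1) :
    HasDerivAt φf (ψf t) t :=
  (hasDerivAt_inner_aux ht0).log (hden ht0 ht1).ne'

lemma hasDerivAt_ψf {t : ℝ} (ht0 : 0 < t) (ht1 : t < 1) :
    HasDerivAt ψf (ψ'f t) t := by
  have hn : HasDerivAt (fun t : ℝ => -(t⁻¹ / 2)) ((t ^ 2)⁻¹ / 2) t := by
    have h := ((hasDerivAt_inv ht0.ne').div_const 2).neg
    exact h.congr_deriv (by ring)
  exact hn.div (hasDerivAt_inner_aux ht0) (hden ht0 ht1).ne'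

lemma norm_sq_fderiv (x : E2) :
    HasFDerivAt (fun y : E2 => ‖y‖ ^ 2) (2 • (innerSL ℝ x)) x :=
  (hasStrictFDerivAt_norm_sq x).hasFDerivAt

lemma log_norm_sq (y : E2) : Real.log (‖y‖ ^ 2) = 2 * Real.log ‖y‖ := by
  rw [Real.log_pow]; push_cast; ring

/-- on the punctured unit disk in `ℝ²` the function
`u₀(x) = ln(1 − ln|x|)` is smooth and satisfies `−Δu₀ = |∇u₀|²` pointwise, with
`|∇u₀|² = 1/(|x|²(1−ln|x|)²)` and `Δu₀ = −1/(|x|²(1−ln|x|)²)`. -/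
theorem statement_15
    (u₀ : EuclideanSpace ℝ (Fin 2) → ℝ)
    (hu₀ : ∀ x, u₀ x = Real.log (1 - Real.log ‖x‖)) :
    ContDiffOn ℝ (⊤ : ℕ∞) u₀ {x : EuclideanSpace ℝ (Fin 2) | 0 < ‖x‖ ∧ ‖x‖ < 1} ∧
    ∀ x : EuclideanSpace ℝ (Fin 2), 0 < ‖x‖ → ‖x‖ < 1 →
      (∑ i, (pd i u₀ x) ^ 2 = 1 / (‖x‖ ^ 2 * (1 - Real.log ‖x‖) ^ 2)) ∧
      (∑ i, pds [i, i] u₀ x = -(1 / (‖x‖ ^ 2 * (1 - Real.log ‖x‖) ^ 2))) ∧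
      -(∑ i, pds [i, i] u₀ x) = ∑ i, (pd i u₀ x) ^ 2 := by
  -- u₀ is globally φf ∘ norm-sq
  have hEq : u₀ = fun y : E2 => φf (‖y‖ ^ 2) := by
    funext y
    rw [hu₀, φf, log_norm_sq]
    ring_nf
  -- basic facts about points in the region
  have key : ∀ x : E2, 0 < ‖x‖ → ‖x‖ < 1 →
      (∀ i, pd i u₀ x = ψf (‖x‖ ^ 2) * (2 * x i)) := by
    intro x hx0 hx1 i
    have ht0 : (0:ℝ) < ‖x‖ ^ 2 := by positivity
    have ht1 : ‖x‖ ^ 2 < 1 := by nlinarith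
    have hF : HasFDerivAt u₀ (ψf (‖x‖ ^ 2) • (2 • (innerSL ℝ x))) x := by
      rw [hEq]
      have := (hasDerivAt_φf ht0 ht1).comp_hasFDerivAt x (norm_sq_fderiv x); exact this
    rw [pd, hF.fderiv]
    simp [EuclideanSpace.inner_single_right, real_inner_smul_left]
  -- second derivatives
  have key2 : ∀ x : E2, 0 < ‖x‖ → ‖x‖ < 1 → ∀ j,
      pds [j, j] u₀ x =
        ψf (‖x‖ ^ 2) * 2 + (2 * x j) * (ψ'f (‖x‖ ^ 2) * (2 * x j)) := by
    intro x hx0 hx1 j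
    have ht0 : (0:ℝ) < ‖x‖ ^ 2 := by positivity
    have ht1 : ‖x‖ ^ 2 < 1 := by nlinarith
    have hS : IsOpen {y : E2 | 0 < ‖y‖ ∧ ‖y‖ < 1} := by
      rw [Set.setOf_and]
      exact (isOpen_lt continuous_const continuous_norm).inter
        (isOpen_lt continuous_norm continuous_const)
    have heq : pd j u₀ =ᶠ[nhds x] fun y : E2 => ψf (‖y‖ ^ 2) * (2 * y j) :=
      Filter.eventuallyEq_of_mem (hS.mem_nhds ⟨hx0, hx1⟩)
        (fun y hy => key y hy.1 hy.2 j)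
    have h1 : HasFDerivAt (fun y : E2 => ψf (‖y‖ ^ 2))
        (ψ'f (‖x‖ ^ 2) • (2 • (innerSL ℝ x))) x :=
      by have := (hasDerivAt_ψf ht0 ht1).comp_hasFDerivAt x (norm_sq_fderiv x); exact this
    have h2 : HasFDerivAt (fun y : E2 => 2 * y j)
        ((2:ℝ) • (EuclideanSpace.proj j : E2 →L[ℝ] ℝ)) x :=
      (EuclideanSpace.proj j : E2 →L[ℝ] ℝ).hasFDerivAt.const_mul 2
    have hG : HasFDerivAt (fun y : E2 => ψf (‖y‖ ^ 2) * (2 * y j)) _ x := h1.mul h2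
    have hpds : pds [j, j] u₀ x = fderiv ℝ (pd j u₀) x (EuclideanSpace.single j 1) := rfl
    rw [hpds, heq.fderiv_eq, hG.fderiv]
    simp [EuclideanSpace.inner_single_right, real_inner_smul_left,
      EuclideanSpace.single_apply]
  constructor
  · -- smoothness
    intro x hx
    obtain ⟨hx0, hx1⟩ := hx
    have ht0 : (0:ℝ) < ‖x‖ ^ 2 := by positivity
    have ht1 : ‖x‖ ^ 2 < 1 := by nlinarith
    have hD := hden ht0 ht1
    have hCA : ContDiffAt ℝ (⊤ : ℕ∞) u₀ x := by
      rw [hEq]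
      have hn : ContDiffAt ℝ (⊤ : ℕ∞) (fun y : E2 => ‖y‖ ^ 2) x :=
        (contDiff_norm_sq (𝕜 := ℝ)).contDiffAt
      have hlog1 : ContDiffAt ℝ (⊤ : ℕ∞) (fun y : E2 => 1 - Real.log (‖y‖ ^ 2) / 2) x :=
        contDiffAt_const.sub (((Real.contDiffAt_log.mpr ht0.ne').comp x hn).div_const 2)
      exact (Real.contDiffAt_log.mpr hD.ne').comp x hlog1
    exact hCA.contDiffWithinAt
  intro x hx0 hx1
  have ht0 : (0:ℝ) < ‖x‖ ^ 2 := by positivity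
  have ht1 : ‖x‖ ^ 2 < 1 := by nlinarith
  have hL : Real.log ‖x‖ < 0 := Real.log_neg hx0 hx1
  have h1L : (0:ℝ) < 1 - Real.log ‖x‖ := by linarith
  have hlogt : Real.log (‖x‖ ^ 2) = 2 * Real.log ‖x‖ := log_norm_sq x
  have hsum : x 0 ^ 2 + x 1 ^ 2 = ‖x‖ ^ 2 := by
    rw [EuclideanSpace.norm_eq, Real.sq_sqrt (by positivity)]
    simp [Fin.sum_univ_two, sq_abs]
  have hgrad : ∑ i, (pd i u₀ x) ^ 2 = 1 / (‖x‖ ^ 2 * (1 - Real.log ‖x‖) ^ 2) := by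
    rw [Fin.sum_univ_two, key x hx0 hx1 0, key x hx0 hx1 1]
    have e1 : (ψf (‖x‖ ^ 2) * (2 * x 0)) ^ 2 + (ψf (‖x‖ ^ 2) * (2 * x 1)) ^ 2
        = ψf (‖x‖ ^ 2) ^ 2 * (4 * (x 0 ^ 2 + x 1 ^ 2)) := by ring
    rw [e1, hsum]
    unfold ψf
    rw [hlogt]
    have h2 : (1 : ℝ) - 2 * Real.log ‖x‖ / 2 = 1 - Real.log ‖x‖ := by ring
    rw [h2]
    field_simp
    ring
  have hlap : ∑ i, pds [i, i] u₀ x = -(1 / (‖x‖ ^ 2 * (1 - Real.log ‖x‖) ^ 2)) := by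
    rw [Fin.sum_univ_two, key2 x hx0 hx1 0, key2 x hx0 hx1 1]
    have e1 : ψf (‖x‖ ^ 2) * 2 + 2 * x 0 * (ψ'f (‖x‖ ^ 2) * (2 * x 0)) +
        (ψf (‖x‖ ^ 2) * 2 + 2 * x 1 * (ψ'f (‖x‖ ^ 2) * (2 * x 1)))
        = 4 * ψf (‖x‖ ^ 2) + 4 * (x 0 ^ 2 + x 1 ^ 2) * ψ'f (‖x‖ ^ 2) := by ring
    rw [e1, hsum]
    unfold ψf ψ'f
    rw [hlogt]
    have h2 : (1 : ℝ) - 2 * Real.log ‖x‖ / 2 = 1 - Real.log ‖x‖ := by ring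
    rw [h2]
    field_simp
    ring
  exact ⟨hgrad, hlap, by rw [hgrad, hlap]; ring⟩
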